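/- Let o : {1,...,n} → {1,...,K} be a category assignment with associated ordinal cost matrix C (prefix-of-ones columns), and let b ∈ Z^K be weakly decreasing and nonnegative with b_{K+1} := 0. Define E_i := {j : o(j) = i}. Then there exists x ∈ {0,1}^n with C·x = b if and only if |E_i| ≥ b_i − b_{i+1} for all i = 1,...,K. -/

import Mathlib

open Finset

/-- Telescoping sum over a tail of `Fin K`. -/
private lemma tele_aux (K : ℕ) (b : Fin K → ℤ) :
    ∀ t m : ℕ, K - m ≤ t →
      (∑ i ∈ Finset.univ.filter (fun i : Fin K => m ≤ (i : ℕ)),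
        (b i - (if h : (i : ℕ) + 1 < K then b ⟨(i : ℕ) + 1, h⟩ else 0)))
        = if h : m < K then b ⟨m, h⟩ else 0 := by
  intro t
  induction t with
  | zero =>
    intro m hm
    rw [dif_neg (by omega)]
    rw [Finset.filter_false_of_mem (fun i _ => by omega), Finset.sum_empty]
  | succ t ih =>
    intro m hm
    by_cases h : m < K
    · have hset : Finset.univ.filter (fun i : Fin K => m ≤ (i : ℕ))
          = insert ⟨m, h⟩ (Finset.univ.filter (fun i : Fin K => m + 1 ≤ (i : ℕ))) := by
        ext i
        simp [Fin.ext_iff]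
        omega
      rw [hset, Finset.sum_insert (by simp), ih (m + 1) (by omega)]
      rw [dif_pos h]
      simp only []
      split_ifs <;> ring
    · rw [dif_neg h]
      rw [Finset.filter_false_of_mem (fun i _ => by omega), Finset.sum_empty]

theorem stmt_11 (n K : ℕ) (o : Fin n → Fin K)
    (C : Matrix (Fin K) (Fin n) ℤ)
    (hC : ∀ (j : Fin K) (i : Fin n), C j i = if j ≤ o i then 1 else 0)
    (b : Fin K → ℤ)
    (hmono : ∀ i j : Fin K, i ≤ j → b j ≤ b i)
    (hnn : ∀ i : Fin K, 0 ≤ b i) :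
    (∃ x : Fin n → ℤ, (∀ j, x j = 0 ∨ x j = 1) ∧ C.mulVec x = b) ↔
      (∀ i : Fin K,
        b i - (if h : (i : ℕ) + 1 < K then b ⟨(i : ℕ) + 1, h⟩ else 0) ≤
          ((Finset.univ.filter (fun j => o j = i)).card : ℤ)) := by
  have key : ∀ (x : Fin n → ℤ) (k : Fin K),
      C.mulVec x k = ∑ j ∈ Finset.univ.filter (fun j => (k : ℕ) ≤ (o j : ℕ)), x j := by
    intro x k
    rw [Matrix.mulVec, dotProduct, Finset.sum_filter]
    apply Finset.sum_congr rfl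
    intro j _
    rw [hC]
    by_cases h : k ≤ o j
    · rw [if_pos h, if_pos (Fin.le_def.mp h), one_mul]
    · rw [if_neg h, if_neg (fun hh => h (Fin.le_def.mpr hh)), zero_mul]
  constructor
  · rintro ⟨x, hx01, hCx⟩ i
    have hsum : ∀ k : Fin K,
        (∑ j ∈ Finset.univ.filter (fun j => (k : ℕ) ≤ (o j : ℕ)), x j) = b k := by
      intro k
      rw [← key x k, hCx]
    have h1 : Finset.univ.filter (fun j : Fin n => (i : ℕ) ≤ (o j : ℕ))
        = Finset.univ.filter (fun j : Fin n => (o j : ℕ) = (i : ℕ))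
          ∪ Finset.univ.filter (fun j : Fin n => (i : ℕ) + 1 ≤ (o j : ℕ)) := by
      ext j
      simp
      omega
    have hdisj : Disjoint (Finset.univ.filter (fun j : Fin n => (o j : ℕ) = (i : ℕ)))
        (Finset.univ.filter (fun j : Fin n => (i : ℕ) + 1 ≤ (o j : ℕ))) := by
      rw [Finset.disjoint_left]
      intro j hj hj'
      simp at hj hj'
      omega
    have hsplit := hsum i
    rw [h1, Finset.sum_union hdisj] at hsplit
    have htail : (∑ j ∈ Finset.univ.filter (fun j : Fin n => (i : ℕ) + 1 ≤ (o j : ℕ)), x j)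
        = if h : (i : ℕ) + 1 < K then b ⟨(i : ℕ) + 1, h⟩ else 0 := by
      by_cases h : (i : ℕ) + 1 < K
      · rw [dif_pos h, ← hsum ⟨(i : ℕ) + 1, h⟩]
      · rw [dif_neg h]
        rw [Finset.filter_false_of_mem (fun j _ => by have := (o j).isLt; omega),
          Finset.sum_empty]
    have hEeq : Finset.univ.filter (fun j : Fin n => o j = i)
        = Finset.univ.filter (fun j : Fin n => (o j : ℕ) = (i : ℕ)) := by
      apply Finset.filter_congr
      intro j _
      simp [Fin.ext_iff]
    have hle : (∑ j ∈ Finset.univ.filter (fun j : Fin n => (o j : ℕ) = (i : ℕ)), x j)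
        ≤ ((Finset.univ.filter (fun j : Fin n => o j = i)).card : ℤ) := by
      rw [hEeq]
      calc (∑ j ∈ Finset.univ.filter (fun j : Fin n => (o j : ℕ) = (i : ℕ)), x j)
          ≤ ∑ _j ∈ Finset.univ.filter (fun j : Fin n => (o j : ℕ) = (i : ℕ)), (1 : ℤ) :=
            Finset.sum_le_sum (fun j _ => by rcases hx01 j with h | h <;> simp [h])
        _ = _ := by simp
    omega
  · intro hcard
    set d : Fin K → ℤ :=
      fun i => b i - (if h : (i : ℕ) + 1 < K then b ⟨(i : ℕ) + 1, h⟩ else 0) with hd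
    have hdnn : ∀ i : Fin K, 0 ≤ d i := by
      intro i
      simp only [hd]
      by_cases h : (i : ℕ) + 1 < K
      · rw [dif_pos h]
        have : b ⟨(i : ℕ) + 1, h⟩ ≤ b i := hmono i ⟨(i : ℕ) + 1, h⟩ (by simp [Fin.le_def])
        omega
      · rw [dif_neg h]
        have := hnn i
        omega
    have hch : ∀ i : Fin K, ∃ S : Finset (Fin n),
        S ⊆ Finset.univ.filter (fun j => o j = i) ∧ S.card = (d i).toNat := by
      intro i
      obtain ⟨S, hS, hSc⟩ := Finset.exists_subset_card_eq (s := Finset.univ.filter (fun j => o j = i)) (n := (d i).toNat)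
        (by rw [← Nat.cast_le (α := ℤ), Int.toNat_of_nonneg (hdnn i)]; exact hcard i)
      exact ⟨S, hS, hSc⟩
    choose S hS hScard using hch
    refine ⟨fun j => if j ∈ S (o j) then 1 else 0, fun j => by by_cases h : j ∈ S (o j) <;> simp [h], ?_⟩
    funext k
    rw [key]
    have hfib : ∀ j ∈ Finset.univ.filter (fun j : Fin n => (k : ℕ) ≤ (o j : ℕ)),
        o j ∈ Finset.univ.filter (fun i : Fin K => (k : ℕ) ≤ (i : ℕ)) := by
      intro j hj
      simp at hj ⊢
      exact hj
    rw [← Finset.sum_fiberwise_of_maps_to hfib]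
    have hinner : ∀ i ∈ Finset.univ.filter (fun i : Fin K => (k : ℕ) ≤ (i : ℕ)),
        (∑ j ∈ (Finset.univ.filter (fun j : Fin n => (k : ℕ) ≤ (o j : ℕ))).filter
            (fun j => o j = i), (if j ∈ S (o j) then (1 : ℤ) else 0)) = d i := by
      intro i hi
      simp only [Finset.mem_filter, Finset.mem_univ, true_and] at hi
      have hfe : (Finset.univ.filter (fun j : Fin n => (k : ℕ) ≤ (o j : ℕ))).filter
          (fun j => o j = i) = Finset.univ.filter (fun j : Fin n => o j = i) := by
        ext j
        simp only [Finset.mem_filter, Finset.mem_univ, true_and]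
        constructor
        · rintro ⟨_, h⟩; exact h
        · intro h; exact ⟨h ▸ hi, h⟩
      rw [hfe]
      have : (∑ j ∈ Finset.univ.filter (fun j : Fin n => o j = i),
          (if j ∈ S (o j) then (1 : ℤ) else 0))
          = ∑ j ∈ Finset.univ.filter (fun j : Fin n => o j = i),
            (if j ∈ S i then (1 : ℤ) else 0) := by
        apply Finset.sum_congr rfl
        intro j hj
        simp only [Finset.mem_filter] at hj
        rw [hj.2]
      rw [this, ← Finset.sum_filter]
      have hfe2 : (Finset.univ.filter (fun j : Fin n => o j = i)).filter (· ∈ S i)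
          = S i := by
        ext j
        simp only [Finset.mem_filter, Finset.mem_univ, true_and]
        constructor
        · rintro ⟨_, h⟩; exact h
        · intro h
          have := hS i h
          simp only [Finset.mem_filter, Finset.mem_univ, true_and] at this
          exact ⟨this, h⟩
      rw [hfe2, Finset.sum_const, hScard i, nsmul_eq_mul, mul_one,
        Int.toNat_of_nonneg (hdnn i)]
    rw [Finset.sum_congr rfl hinner]
    have := tele_aux K b K (k : ℕ) (by omega)
    simp only [← hd] at this
    rw [this, dif_pos k.isLt]
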